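/- The infimum over polynomials p of total degree at most 2 of the supremum over the simplex T^3 of |x_1 x_2 x_3 - p(x)| equals 1/72, and is attained by p(x) = x_1x_2x_3 - R_3(x)/72 where R_3(x) = 72 x_1x_2x_3 - 4e_1 + 4e_1² - 8e_2 + 1. -/

import Mathlib

open MvPolynomial

/-- The standard simplex `T³ = {x ∈ ℝ³ : xᵢ ≥ 0, x₁+x₂+x₃ ≤ 1}`. -/
def simplexT3 : Set (Fin 3 → ℝ) := {x | (∀ i, 0 ≤ x i) ∧ x 0 + x 1 + x 2 ≤ 1}

/-- `R₃` as a polynomial: `72 x₁x₂x₃ - 4e₁ + 4e₁² - 8e₂ + 1`. -/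
noncomputable def R3poly : MvPolynomial (Fin 3) ℝ :=
  C 72 * (X 0 * X 1 * X 2) - C 4 * (X 0 + X 1 + X 2) + C 4 * (X 0 + X 1 + X 2) ^ 2
    - C 8 * (X 0 * X 1 + X 1 * X 2 + X 0 * X 2) + 1

/-- The extremal polynomial `p(x) = x₁x₂x₃ - R₃(x)/72`. -/
noncomputable def pstar : MvPolynomial (Fin 3) ℝ :=
  X 0 * X 1 * X 2 - C (1 / 72) * R3poly

lemma simplex_isClosed : IsClosed simplexT3 := by
  have : simplexT3 = (⋂ i : Fin 3, {x : Fin 3 → ℝ | 0 ≤ x i}) ∩ {x | x 0 + x 1 + x 2 ≤ 1} := by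
    ext x; simp [simplexT3, Set.mem_iInter]
  rw [this]
  exact (isClosed_iInter fun i => isClosed_le continuous_const (continuous_apply i)).inter
    (isClosed_le (by continuity) continuous_const)

lemma simplex_isCompact : IsCompact simplexT3 := by
  refine IsCompact.of_isClosed_subset (isCompact_Icc (a := (0 : Fin 3 → ℝ)) (b := 1))
    simplex_isClosed ?_
  rintro x ⟨hx, hs⟩
  refine ⟨fun i => hx i, fun i => ?_⟩
  fin_cases i <;> simp <;> [linarith [hx 1, hx 2]; linarith [hx 0, hx 2]; linarith [hx 0, hx 1]]

lemma mem_simplex (a b c : ℝ) (ha : 0 ≤ a) (hb : 0 ≤ b) (hc : 0 ≤ c) (h : a + b + c ≤ 1) :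
    ![a, b, c] ∈ simplexT3 := by
  refine ⟨fun i => ?_, by simpa using h⟩
  fin_cases i <;> simpa

lemma bdd_err (p : MvPolynomial (Fin 3) ℝ) :
    BddAbove ((fun x => |x 0 * x 1 * x 2 - MvPolynomial.eval x p|) '' simplexT3) := by
  refine (simplex_isCompact.image ?_).bddAbove
  exact ((((continuous_apply 0).mul (continuous_apply 1)).mul (continuous_apply 2)).sub
    (MvPolynomial.continuous_eval p)).abs

lemma L_vanish (p : MvPolynomial (Fin 3) ℝ) (hp : p.totalDegree ≤ 2) :
    eval ![1,0,0] p + eval ![0,1,0] p + eval ![0,0,1] p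
      + 9 * eval ![1/3,1/3,1/3] p
      - 4 * (eval ![1/2,1/2,0] p + eval ![1/2,0,1/2] p + eval ![0,1/2,1/2] p) = 0 := by
  simp only [eval_eq', Fin.prod_univ_three]
  simp only [mul_add, Finset.mul_sum, ← Finset.sum_add_distrib, ← Finset.sum_sub_distrib]
  apply Finset.sum_eq_zero
  intro m hm
  have hd : m 0 + m 1 + m 2 ≤ 2 := by
    have h := (MvPolynomial.le_totalDegree hm).trans hp
    rwa [Finsupp.sum_fintype _ _ (fun i => rfl), Fin.sum_univ_three] at h
  have h0 : m 0 ≤ 2 := by omega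
  have h1 : m 1 ≤ 2 := by omega
  have h2 : m 2 ≤ 2 := by omega
  set a := m 0 with ha
  set b := m 1 with hb
  set c := m 2 with hc
  clear_value a b c
  interval_cases a <;> interval_cases b <;> interval_cases c <;>
    first
      | (exfalso; omega)
      | (norm_num [Matrix.cons_val_zero, Matrix.cons_val_one, Matrix.head_cons,
          Matrix.cons_val_two, Matrix.tail_cons]; try ring)

lemma pstar_eq : pstar =
    C (1/18) * (X 0 + X 1 + X 2) - C (1/18) * (X 0 + X 1 + X 2)^2
      + C (1/9) * (X 0 * X 1 + X 1 * X 2 + X 0 * X 2) - C (1/72) := by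
  have h1 : (C (1/72) : MvPolynomial (Fin 3) ℝ) * C 72 = 1 := by
    rw [← map_mul]; norm_num
  have h2 : (C (1/72) : MvPolynomial (Fin 3) ℝ) * C 4 = C (1/18) := by
    rw [← map_mul]; norm_num
  have h3 : (C (1/72) : MvPolynomial (Fin 3) ℝ) * C 8 = C (1/9) := by
    rw [← map_mul]; norm_num
  unfold pstar R3poly
  linear_combination (-(X 0 * X 1 * X 2)) * h1
    + ((X 0 + X 1 + X 2) - (X 0 + X 1 + X 2)^2) * h2
    + (X 0 * X 1 + X 1 * X 2 + X 0 * X 2) * h3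

lemma pstar_deg : pstar.totalDegree ≤ 2 := by
  rw [pstar_eq]
  have hX : ∀ i : Fin 3, (X i : MvPolynomial (Fin 3) ℝ).totalDegree ≤ 1 :=
    fun i => le_of_eq (totalDegree_X i)
  have he1 : (X 0 + X 1 + X 2 : MvPolynomial (Fin 3) ℝ).totalDegree ≤ 1 :=
    (totalDegree_add _ _).trans (sup_le ((totalDegree_add _ _).trans
      (sup_le (hX 0) (hX 1))) (hX 2))
  have hmul : ∀ i j : Fin 3, (X i * X j : MvPolynomial (Fin 3) ℝ).totalDegree ≤ 2 :=
    fun i j => (totalDegree_mul _ _).trans ((add_le_add (hX i) (hX j)).trans (by norm_num))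
  have hCm : ∀ (r : ℝ) (q : MvPolynomial (Fin 3) ℝ), q.totalDegree ≤ 2 →
      (C r * q).totalDegree ≤ 2 := fun r q hq =>
    (totalDegree_mul _ _).trans (by simpa [totalDegree_C] using hq)
  refine (totalDegree_sub _ _).trans (sup_le ?_ (by simp [totalDegree_C]))
  refine (totalDegree_add _ _).trans (sup_le ?_ ?_)
  · refine (totalDegree_sub _ _).trans (sup_le ?_ ?_)
    · exact hCm _ _ (he1.trans one_le_two)
    · refine hCm _ _ ((totalDegree_pow _ _).trans ?_)
      exact (Nat.mul_le_mul le_rfl he1).trans (by norm_num)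
  · refine hCm _ _ ?_
    exact (totalDegree_add _ _).trans (sup_le ((totalDegree_add _ _).trans
      (sup_le (hmul 0 1) (hmul 1 2))) (hmul 0 2))

lemma r3_le_one (x y z : ℝ) (hx : 0 ≤ x) (hy : 0 ≤ y) (hz : 0 ≤ z) (hs : x + y + z ≤ 1) :
    72*x*y*z - 4*(x+y+z) + 4*(x+y+z)^2 - 8*(x*y+y*z+x*z) + 1 ≤ 1 := by
  nlinarith [mul_nonneg hx (sq_nonneg (y-z)), mul_nonneg hy (sq_nonneg (x-z)),
    mul_nonneg hz (sq_nonneg (x-y)),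
    mul_nonneg (add_nonneg (add_nonneg (mul_nonneg hx hy) (mul_nonneg hy hz))
      (mul_nonneg hx hz)) (by linarith : (0:ℝ) ≤ 1 - (x+y+z)),
    mul_nonneg (add_nonneg (add_nonneg hx hy) hz) (by linarith : (0:ℝ) ≤ 1 - (x+y+z))]

lemma r3_ge_neg_one (x y z : ℝ) (hx : 0 ≤ x) (hy : 0 ≤ y) (hz : 0 ≤ z) :
    -1 ≤ 72*x*y*z - 4*(x+y+z) + 4*(x+y+z)^2 - 8*(x*y+y*z+x*z) + 1 := by
  rcases le_or_gt 8 (72*z) with h | h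
  · nlinarith [sq_nonneg (2*x+2*y-1), sq_nonneg (2*z-1),
      mul_nonneg (mul_nonneg hx hy) (by linarith : (0:ℝ) ≤ 72*z - 8)]
  · have h9 : (0:ℝ) < 1 + 9*z := by linarith
    nlinarith [mul_nonneg (mul_nonneg h9.le (by linarith : (0:ℝ) ≤ 8 - 72*z)) (sq_nonneg (x-y)),
      sq_nonneg ((x+y)*(1+9*z)-1), mul_nonneg hz (sq_nonneg (z - 4/9)), hz, h9,
      mul_nonneg (mul_nonneg hx hy) hz]

lemma err_pstar (x : Fin 3 → ℝ) :
    x 0 * x 1 * x 2 - eval x pstar =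
      (72*(x 0*x 1*x 2) - 4*(x 0+x 1+x 2) + 4*(x 0+x 1+x 2)^2
        - 8*(x 0*x 1+x 1*x 2+x 0*x 2) + 1) / 72 := by
  simp [pstar, R3poly]
  ring

lemma sup_pstar :
    sSup ((fun x => |x 0 * x 1 * x 2 - MvPolynomial.eval x pstar|) '' simplexT3) = 1 / 72 := by
  have hmem : (1/72 : ℝ) ∈ (fun x => |x 0 * x 1 * x 2 - eval x pstar|) '' simplexT3 := by
    refine ⟨![0,0,0], mem_simplex 0 0 0 le_rfl le_rfl le_rfl (by norm_num), ?_⟩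
    show |![(0:ℝ),0,0] 0 * ![(0:ℝ),0,0] 1 * ![(0:ℝ),0,0] 2 - eval ![(0:ℝ),0,0] pstar| = 1/72
    rw [err_pstar]
    norm_num [show (![(0:ℝ),0,0] : Fin 3 → ℝ) 2 = 0 from rfl]
  refine le_antisymm (csSup_le ⟨_, hmem⟩ ?_) (le_csSup (bdd_err _) hmem)
  rintro r ⟨x, ⟨hx, hs⟩, rfl⟩
  show |x 0 * x 1 * x 2 - eval x pstar| ≤ 1/72
  rw [err_pstar]
  have hup := r3_le_one (x 0) (x 1) (x 2) (hx 0) (hx 1) (hx 2) hs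
  have hlo := r3_ge_neg_one (x 0) (x 1) (x 2) (hx 0) (hx 1) (hx 2)
  rw [abs_le]
  constructor <;> [linarith; linarith]

lemma lower_bound (p : MvPolynomial (Fin 3) ℝ) (hp : p.totalDegree ≤ 2) :
    1/72 ≤ sSup ((fun x => |x 0 * x 1 * x 2 - MvPolynomial.eval x p|) '' simplexT3) := by
  have hb := bdd_err p
  have key : ∀ y : Fin 3 → ℝ, y ∈ simplexT3 → |y 0 * y 1 * y 2 - eval y p| ≤
      sSup ((fun x => |x 0 * x 1 * x 2 - MvPolynomial.eval x p|) '' simplexT3) :=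
    fun y hy => le_csSup hb ⟨y, hy, rfl⟩
  have k1 := key ![1,0,0] (mem_simplex _ _ _ (by norm_num) (by norm_num) (by norm_num) (by norm_num))
  have k2 := key ![0,1,0] (mem_simplex _ _ _ (by norm_num) (by norm_num) (by norm_num) (by norm_num))
  have k3 := key ![0,0,1] (mem_simplex _ _ _ (by norm_num) (by norm_num) (by norm_num) (by norm_num))
  have k4 := key ![1/3,1/3,1/3]
    (mem_simplex _ _ _ (by norm_num) (by norm_num) (by norm_num) (by norm_num))
  have k5 := key ![1/2,1/2,0]
    (mem_simplex _ _ _ (by norm_num) (by norm_num) (by norm_num) (by norm_num))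
  have k6 := key ![1/2,0,1/2]
    (mem_simplex _ _ _ (by norm_num) (by norm_num) (by norm_num) (by norm_num))
  have k7 := key ![0,1/2,1/2]
    (mem_simplex _ _ _ (by norm_num) (by norm_num) (by norm_num) (by norm_num))
  simp only [Matrix.cons_val_zero, Matrix.cons_val_one, Matrix.head_cons,
    Matrix.cons_val_two, Matrix.tail_cons] at k1 k2 k3 k4 k5 k6 k7
  have a1 := abs_le.mp k1
  have a2 := abs_le.mp k2
  have a3 := abs_le.mp k3
  have a4 := abs_le.mp k4
  have a5 := abs_le.mp k5
  have a6 := abs_le.mp k6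
  have a7 := abs_le.mp k7
  have hL := L_vanish p hp
  linarith [a1.1, a1.2, a2.1, a2.2, a3.1, a3.2, a4.1, a4.2, a5.1, a5.2, a6.1, a6.2, a7.1, a7.2]

/-- `E₂(x₁x₂x₃; T³) = 1/72`, attained by `pstar`. -/
theorem best_approx_eq_T3 :
    sInf {r : ℝ | ∃ p : MvPolynomial (Fin 3) ℝ, p.totalDegree ≤ 2 ∧
        r = sSup ((fun x => |x 0 * x 1 * x 2 - MvPolynomial.eval x p|) '' simplexT3)}
      = 1 / 72 ∧
    pstar.totalDegree ≤ 2 ∧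
    sSup ((fun x => |x 0 * x 1 * x 2 - MvPolynomial.eval x pstar|) '' simplexT3) = 1 / 72 := by
  refine ⟨?_, pstar_deg, sup_pstar⟩
  have hmem : (1/72 : ℝ) ∈ {r : ℝ | ∃ p : MvPolynomial (Fin 3) ℝ, p.totalDegree ≤ 2 ∧
      r = sSup ((fun x => |x 0 * x 1 * x 2 - MvPolynomial.eval x p|) '' simplexT3)} :=
    ⟨pstar, pstar_deg, sup_pstar.symm⟩
  have hlb : (1/72 : ℝ) ∈ lowerBounds {r : ℝ | ∃ p : MvPolynomial (Fin 3) ℝ,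
      p.totalDegree ≤ 2 ∧
      r = sSup ((fun x => |x 0 * x 1 * x 2 - MvPolynomial.eval x p|) '' simplexT3)} := by
    rintro r ⟨p, hp, rfl⟩
    exact lower_bound p hp
  exact le_antisymm (csInf_le ⟨1/72, hlb⟩ hmem) (le_csInf ⟨1/72, hmem⟩ hlb)
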